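/- arXiv:2108.01753 — 6 statements merged into one kernel-verified Lean document; each statement's English description precedes it below -/
import Mathlib

section
/- Assume p(s) > 0 for every s ∈ S. Let f be a valid deterministic padding scheme and let s, s' ∈ S satisfy n(s) < n(s') and f(s) > f(s'). Define f₁ to agree with f except f₁(s) = f(s'), and f₂ to agree with f except f₂(s') = f(s). Then f₁ and f₂ are both valid deterministic padding schemes, and min(H(f₁), H(f₂)) < H(f). -/
/-- `η(t) = -t·log₂ t` (note `Real.logb 2 0 = 0`, so `η 0 = 0`). -/
noncomputable def eta (t : ℝ) : ℝ := -(t * Real.logb 2 t)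

/-- A deterministic padding scheme `f` is valid if `n s ≤ f s ≤ c·n s` for all `s`. -/
def ValidDet {S : Type*} (n : S → ℕ) (c : ℝ) (f : S → ℕ) : Prop :=
  ∀ s, n s ≤ f s ∧ (f s : ℝ) ≤ c * (n s : ℝ)

/-- Padded-size entropy `H(f) = Σ_{y ∈ f(S)} η(Σ_{s : f s = y} p s)`. -/
noncomputable def Hent {S : Type*} [Fintype S] (p : S → ℝ) (f : S → ℕ) : ℝ :=
  ∑ y ∈ Finset.univ.image f, eta (∑ s ∈ Finset.univ.filter (fun s => f s = y), p s)

lemma eta_zero : eta 0 = 0 := by simp [eta]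

lemma eta_combo {u v l m : ℝ} (hu : 0 ≤ u) (hv : 0 ≤ v) (hne : u ≠ v) (hl : 0 < l) (hm : 0 < m)
    (hlm : l + m = 1) : l * eta u + m * eta v < eta (l * u + m * v) := by
  have h := Real.strictConcaveOn_negMulLog.2 (Set.mem_Ici.mpr hu) (Set.mem_Ici.mpr hv) hne hl hm hlm
  simp only [smul_eq_mul] at h
  have h2 : 0 < Real.log 2 := Real.log_pos one_lt_two
  have he : ∀ t, eta t = Real.negMulLog t / Real.log 2 := fun t => by
    unfold eta Real.negMulLog Real.logb; ring
  rw [he, he, he, mul_div_assoc', mul_div_assoc', ← add_div]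
  exact (div_lt_div_iff_of_pos_right h2).mpr h

lemma key (A B x y : ℝ) (hx : 0 < x) (hy : 0 < y) (hxB : x ≤ B) (hyA : y ≤ A) :
    min (eta (A + x) + eta (B - x)) (eta (A - y) + eta (B + y)) < eta A + eta B := by
  have hxy : 0 < x + y := by linarith
  have hl : 0 < x / (x + y) := div_pos hx hxy
  have hm : 0 < y / (x + y) := div_pos hy hxy
  have hlm : x / (x + y) + y / (x + y) = 1 := by
    rw [← add_div, div_self hxy.ne']
  have h1 : x / (x + y) * eta (A - y) + y / (x + y) * eta (A + x) < eta A := by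
    have h := eta_combo (u := A - y) (v := A + x) (by linarith) (by linarith)
      (by intro h; nlinarith) hl hm hlm
    have hA : x / (x + y) * (A - y) + y / (x + y) * (A + x) = A := by
      field_simp; ring
    rwa [hA] at h
  have h2 : x / (x + y) * eta (B + y) + y / (x + y) * eta (B - x) < eta B := by
    have h := eta_combo (u := B + y) (v := B - x) (by linarith) (by linarith)
      (by intro h; nlinarith) hl hm hlm
    have hB : x / (x + y) * (B + y) + y / (x + y) * (B - x) = B := by
      field_simp; ring
    rwa [hB] at h
  have hmin1 : min (eta (A + x) + eta (B - x)) (eta (A - y) + eta (B + y))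
      ≤ eta (A + x) + eta (B - x) := min_le_left _ _
  have hmin2 : min (eta (A + x) + eta (B - x)) (eta (A - y) + eta (B + y))
      ≤ eta (A - y) + eta (B + y) := min_le_right _ _
  set M := min (eta (A + x) + eta (B - x)) (eta (A - y) + eta (B + y)) with hM
  have hMeq : M = x / (x + y) * M + y / (x + y) * M := by
    rw [← add_mul, hlm, one_mul]
  have hh1 := mul_le_mul_of_nonneg_left hmin1 hm.le
  have hh2 := mul_le_mul_of_nonneg_left hmin2 hl.le
  nlinarith [hh1, hh2, hMeq, h1, h2]

/-- if `f` is valid with `n s < n s'` but `f s > f s'`, then both swaps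
`f₁` and `f₂` are valid and one of them strictly decreases the padded-size entropy. -/
theorem stmt_2 {S : Type*} [Fintype S] [DecidableEq S] [Nonempty S]
    (n : S → ℕ) (hn : ∀ s, 1 ≤ n s)
    (p : S → ℝ) (hp : ∀ s, 0 < p s) (hsum : ∑ s, p s = 1)
    (c : ℝ) (hc : 1 ≤ c)
    (f : S → ℕ) (hf : ValidDet n c f)
    (s s' : S) (hss' : n s < n s') (hff : f s' < f s)
    (f₁ f₂ : S → ℕ)
    (hf₁ : f₁ = Function.update f s (f s'))
    (hf₂ : f₂ = Function.update f s' (f s)) :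
    ValidDet n c f₁ ∧ ValidDet n c f₂ ∧
      min (Hent p f₁) (Hent p f₂) < Hent p f := by
  have hss : s ≠ s' := by intro h; exact absurd (h ▸ hss') (lt_irrefl _)
  have hcpos : (0:ℝ) < c := lt_of_lt_of_le one_pos hc
  -- validity of f₁
  have hv1 : ValidDet n c f₁ := by
    intro t
    by_cases ht : t = s
    · rw [hf₁, ht, Function.update_self]
      refine ⟨le_trans (le_of_lt hss') (hf s').1, ?_⟩
      calc (f s' : ℝ) ≤ (f s : ℝ) := by exact_mod_cast le_of_lt hff
        _ ≤ c * (n s : ℝ) := (hf s).2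
    · rw [hf₁, Function.update_of_ne ht]; exact hf t
  -- validity of f₂
  have hv2 : ValidDet n c f₂ := by
    intro t
    by_cases ht : t = s'
    · rw [hf₂, ht, Function.update_self]
      refine ⟨le_trans (hf s').1 (le_of_lt hff), ?_⟩
      calc (f s : ℝ) ≤ c * (n s : ℝ) := (hf s).2
        _ ≤ c * (n s' : ℝ) := by
            apply mul_le_mul_of_nonneg_left _ hcpos.le
            exact_mod_cast le_of_lt hss'
    · rw [hf₂, Function.update_of_ne ht]; exact hf t
  refine ⟨hv1, hv2, ?_⟩
  -- entropy part
  have hab : f s' ≠ f s := Nat.ne_of_lt hff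
  set T := Finset.univ.image f with hT
  have haT : f s' ∈ T := Finset.mem_image_of_mem f (Finset.mem_univ s')
  have hbT : f s ∈ T := Finset.mem_image_of_mem f (Finset.mem_univ s)
  set W : (S → ℕ) → ℕ → ℝ := fun g y => ∑ t ∈ Finset.univ.filter (fun t => g t = y), p t
    with hWdef
  -- any g with image ⊆ T has Hent expressible as a sum over T
  have hHT : ∀ g : S → ℕ, Finset.univ.image g ⊆ T → Hent p g = ∑ y ∈ T, eta (W g y) := by
    intro g hsub
    unfold Hent
    apply Finset.sum_subset hsub
    intro y _ hyn
    have hempty : Finset.univ.filter (fun t => g t = y) = ∅ := by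
      apply Finset.filter_eq_empty_iff.mpr
      intro t _ hgt
      exact hyn (hgt ▸ Finset.mem_image_of_mem g (Finset.mem_univ t))
    show eta (W g y) = 0
    rw [hWdef]
    simp only [hempty, Finset.sum_empty]
    exact eta_zero
  have hsub1 : Finset.univ.image f₁ ⊆ T := by
    intro y hy
    obtain ⟨t, _, rfl⟩ := Finset.mem_image.mp hy
    by_cases ht : t = s
    · rw [hf₁, ht, Function.update_self]; exact haT
    · rw [hf₁, Function.update_of_ne ht]; exact Finset.mem_image_of_mem f (Finset.mem_univ t)
  have hsub2 : Finset.univ.image f₂ ⊆ T := by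
    intro y hy
    obtain ⟨t, _, rfl⟩ := Finset.mem_image.mp hy
    by_cases ht : t = s'
    · rw [hf₂, ht, Function.update_self]; exact hbT
    · rw [hf₂, Function.update_of_ne ht]; exact Finset.mem_image_of_mem f (Finset.mem_univ t)
  -- split a sum over T into terms at f s', f s, and the rest
  have hbT' : f s ∈ T.erase (f s') := Finset.mem_erase.mpr ⟨Ne.symm hab, hbT⟩
  have hsplit : ∀ F : ℕ → ℝ,
      ∑ y ∈ T, F y = F (f s') + (F (f s) + ∑ y ∈ (T.erase (f s')).erase (f s), F y) := by
    intro F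
    rw [← Finset.add_sum_erase _ F haT, ← Finset.add_sum_erase _ F hbT']
  -- on the rest, the weights agree
  have hrest1 : ∀ y ∈ (T.erase (f s')).erase (f s), W f₁ y = W f y := by
    intro y hy
    have hya : y ≠ f s' := (Finset.mem_erase.mp (Finset.mem_erase.mp hy).2).1
    have hyb : y ≠ f s := (Finset.mem_erase.mp hy).1
    apply Finset.sum_congr _ (fun _ _ => rfl)
    apply Finset.filter_congr
    intro t _
    by_cases ht : t = s
    · rw [ht, hf₁, Function.update_self]
      exact ⟨fun h => absurd h.symm hya, fun h => absurd h.symm hyb⟩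
    · rw [hf₁, Function.update_of_ne ht]
  have hrest2 : ∀ y ∈ (T.erase (f s')).erase (f s), W f₂ y = W f y := by
    intro y hy
    have hya : y ≠ f s' := (Finset.mem_erase.mp (Finset.mem_erase.mp hy).2).1
    have hyb : y ≠ f s := (Finset.mem_erase.mp hy).1
    apply Finset.sum_congr _ (fun _ _ => rfl)
    apply Finset.filter_congr
    intro t _
    by_cases ht : t = s'
    · rw [ht, hf₂, Function.update_self]
      exact ⟨fun h => absurd h.symm hyb, fun h => absurd h.symm hya⟩
    · rw [hf₂, Function.update_of_ne ht]
  -- bucket membership facts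
  have hsb : s ∈ Finset.univ.filter (fun t => f t = f s) := by simp
  have hsa : s' ∈ Finset.univ.filter (fun t => f t = f s') := by simp
  have hsnota : s ∉ Finset.univ.filter (fun t => f t = f s') := by
    simp only [Finset.mem_filter, Finset.mem_univ, true_and]
    exact fun h => hab (h ▸ rfl) |>.elim
  have hsnotb : s' ∉ Finset.univ.filter (fun t => f t = f s) := by
    simp only [Finset.mem_filter, Finset.mem_univ, true_and]
    exact fun h => hab (h ▸ rfl) |>.elim
  -- weight updates for f₁
  have hW1a : W f₁ (f s') = W f (f s') + p s := by
    have hfil : Finset.univ.filter (fun t => f₁ t = f s')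
        = insert s (Finset.univ.filter (fun t => f t = f s')) := by
      ext t
      simp only [Finset.mem_insert, Finset.mem_filter, Finset.mem_univ, true_and]
      by_cases ht : t = s
      · rw [ht, hf₁, Function.update_self]; simp
      · rw [hf₁, Function.update_of_ne ht]; simp [ht]
    show ∑ t ∈ Finset.univ.filter (fun t => f₁ t = f s'), p t = _
    rw [hfil, Finset.sum_insert hsnota]
    ring_nf; rfl
  have hW1b : W f₁ (f s) = W f (f s) - p s := by
    have hfil : Finset.univ.filter (fun t => f₁ t = f s)
        = (Finset.univ.filter (fun t => f t = f s)).erase s := by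
      ext t
      simp only [Finset.mem_erase, Finset.mem_filter, Finset.mem_univ, true_and]
      by_cases ht : t = s
      · rw [ht, hf₁, Function.update_self]; simp [hab]
      · rw [hf₁, Function.update_of_ne ht]; simp [ht]
    have := Finset.add_sum_erase _ p hsb
    show ∑ t ∈ Finset.univ.filter (fun t => f₁ t = f s), p t = _
    rw [hfil]
    show ∑ t ∈ (Finset.univ.filter (fun t => f t = f s)).erase s, p t = _
    linarith [this]
  -- weight updates for f₂
  have hW2b : W f₂ (f s) = W f (f s) + p s' := by
    have hfil : Finset.univ.filter (fun t => f₂ t = f s)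
        = insert s' (Finset.univ.filter (fun t => f t = f s)) := by
      ext t
      simp only [Finset.mem_insert, Finset.mem_filter, Finset.mem_univ, true_and]
      by_cases ht : t = s'
      · rw [ht, hf₂, Function.update_self]; simp
      · rw [hf₂, Function.update_of_ne ht]; simp [ht]
    show ∑ t ∈ Finset.univ.filter (fun t => f₂ t = f s), p t = _
    rw [hfil, Finset.sum_insert hsnotb]
    ring_nf; rfl
  have hW2a : W f₂ (f s') = W f (f s') - p s' := by
    have hfil : Finset.univ.filter (fun t => f₂ t = f s')
        = (Finset.univ.filter (fun t => f t = f s')).erase s' := by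
      ext t
      simp only [Finset.mem_erase, Finset.mem_filter, Finset.mem_univ, true_and]
      by_cases ht : t = s'
      · rw [ht, hf₂, Function.update_self]; simp [Ne.symm hab]
      · rw [hf₂, Function.update_of_ne ht]; simp [ht]
    have := Finset.add_sum_erase _ p hsa
    show ∑ t ∈ Finset.univ.filter (fun t => f₂ t = f s'), p t = _
    rw [hfil]
    show ∑ t ∈ (Finset.univ.filter (fun t => f t = f s')).erase s', p t = _
    linarith [this]
  -- bounds
  have hpsB : p s ≤ W f (f s) :=
    Finset.single_le_sum (fun t _ => (hp t).le) hsb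
  have hpsA : p s' ≤ W f (f s') :=
    Finset.single_le_sum (fun t _ => (hp t).le) hsa
  -- assemble
  have hRest : ∑ y ∈ (T.erase (f s')).erase (f s), eta (W f₁ y)
      = ∑ y ∈ (T.erase (f s')).erase (f s), eta (W f y) :=
    Finset.sum_congr rfl (fun y hy => by rw [hrest1 y hy])
  have hRest2 : ∑ y ∈ (T.erase (f s')).erase (f s), eta (W f₂ y)
      = ∑ y ∈ (T.erase (f s')).erase (f s), eta (W f y) :=
    Finset.sum_congr rfl (fun y hy => by rw [hrest2 y hy])
  rw [hHT f (le_refl _), hHT f₁ hsub1, hHT f₂ hsub2,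
    hsplit (fun y => eta (W f y)), hsplit (fun y => eta (W f₁ y)),
    hsplit (fun y => eta (W f₂ y))]
  simp only [hRest, hRest2, hW1a, hW1b, hW2a, hW2b]
  set R := ∑ y ∈ (T.erase (f s')).erase (f s), eta (W f y)
  have hkey := key (W f (f s')) (W f (f s)) (p s) (p s') (hp s) (hp s') hpsB hpsA
  rcases min_lt_iff.mp hkey with h | h
  · exact min_lt_iff.mpr (Or.inl (by linarith))
  · exact min_lt_iff.mpr (Or.inr (by linarith))
end

section
/- Assume p(s) > 0 for every s ∈ S. If f is a valid deterministic padding scheme such that H(f) ≤ H(g) for every valid deterministic padding scheme g, then f is nondecreasing in object size: for all s, s' ∈ S, n(s) < n(s') implies f(s) ≤ f(s'). -/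
lemma eta_eq (t : ℝ) : eta t = Real.negMulLog t / Real.log 2 := by
  simp [eta, Real.negMulLog, Real.logb]
  ring

/-- Strict increment inequality from strict concavity of `negMulLog`. -/
lemma negMulLog_incr {a b q : ℝ} (ha : 0 ≤ a) (hab : a < b) (hq : 0 < q) :
    Real.negMulLog a + Real.negMulLog (b + q) <
      Real.negMulLog (a + q) + Real.negMulLog b := by
  have hD : 0 < b + q - a := by linarith
  set μ := q / (b + q - a) with hμdef
  set ν := (b - a) / (b + q - a) with hνdef
  have hμ : 0 < μ := div_pos hq hD
  have hν : 0 < ν := div_pos (by linarith) hD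
  have hμν : μ + ν = 1 := by
    rw [hμdef, hνdef, ← add_div]
    rw [show q + (b - a) = b + q - a by ring, div_self hD.ne']
  have hbq : (0:ℝ) ≤ b + q := by linarith
  have hne : a ≠ b + q := by linarith
  have h1 := Real.strictConcaveOn_negMulLog.2 (Set.mem_Ici.2 ha) (Set.mem_Ici.2 hbq)
    hne hν hμ (by linarith)
  have h2 := Real.strictConcaveOn_negMulLog.2 (Set.mem_Ici.2 ha) (Set.mem_Ici.2 hbq)
    hne hμ hν (by linarith)
  have e1 : ν • a + μ • (b + q) = a + q := by
    simp only [smul_eq_mul, hμdef, hνdef]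
    field_simp
    ring
  have e2 : μ • a + ν • (b + q) = b := by
    simp only [smul_eq_mul, hμdef, hνdef]
    field_simp
    ring
  rw [e1] at h1
  rw [e2] at h2
  simp only [smul_eq_mul] at h1 h2
  have hkey : ν * Real.negMulLog a + μ * Real.negMulLog (b + q)
      + (μ * Real.negMulLog a + ν * Real.negMulLog (b + q))
      = Real.negMulLog a + Real.negMulLog (b + q) := by
    linear_combination (Real.negMulLog a + Real.negMulLog (b + q)) * hμν
  linarith [add_lt_add h1 h2]

lemma eta_incr {a b q : ℝ} (ha : 0 ≤ a) (hab : a < b) (hq : 0 < q) :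
    eta a + eta (b + q) < eta (a + q) + eta b := by
  have h2 : (0:ℝ) < Real.log 2 := Real.log_pos (by norm_num)
  have := negMulLog_incr ha hab hq
  rw [eta_eq, eta_eq, eta_eq, eta_eq, ← add_div, ← add_div]
  exact (div_lt_div_iff_of_pos_right h2).2 this

section Mass

variable {S : Type*} [Fintype S] [DecidableEq S]

noncomputable def mass (p : S → ℝ) (f : S → ℕ) (y : ℕ) : ℝ :=
  ∑ s ∈ Finset.univ.filter (fun s => f s = y), p s

lemma Hent_eq_sum (p : S → ℝ) (f : S → ℕ) (T : Finset ℕ)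
    (hT : Finset.univ.image f ⊆ T) :
    Hent p f = ∑ y ∈ T, eta (mass p f y) := by
  rw [Hent]
  simp only [mass]
  refine Finset.sum_subset hT fun y _ hy => ?_
  have hempty : Finset.univ.filter (fun s => f s = y) = ∅ := by
    ext t
    simp only [Finset.mem_filter, Finset.mem_univ, true_and, Finset.notMem_empty, iff_false]
    intro h
    exact hy (h ▸ Finset.mem_image_of_mem f (Finset.mem_univ t))
  rw [hempty, Finset.sum_empty, eta_zero]

lemma mass_update (p : S → ℝ) (f : S → ℕ) (s0 : S) (y' : ℕ) (y : ℕ) :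
    mass p (Function.update f s0 y') y =
      mass p f y + (if y' = y then p s0 else 0) - (if f s0 = y then p s0 else 0) := by
  classical
  have key : ∀ g : S → ℕ, mass p g y = ∑ t : S, (if g t = y then p t else 0) := by
    intro g
    rw [mass, Finset.sum_filter]
  rw [key, key]
  rw [← Finset.add_sum_erase Finset.univ _ (Finset.mem_univ s0),
      ← Finset.add_sum_erase Finset.univ (fun t => if f t = y then p t else 0)
        (Finset.mem_univ s0)]
  have heq : ∑ t ∈ Finset.univ.erase s0, (if Function.update f s0 y' t = y then p t else 0)
      = ∑ t ∈ Finset.univ.erase s0, (if f t = y then p t else 0) := by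
    refine Finset.sum_congr rfl fun t ht => ?_
    rw [Function.update_of_ne (Finset.ne_of_mem_erase ht)]
  rw [heq, Function.update_self]
  ring

lemma mass_ge (p : S → ℝ) (hp : ∀ s, 0 < p s) (f : S → ℕ) (s0 : S) :
    p s0 ≤ mass p f (f s0) := by
  apply Finset.single_le_sum (f := p) (fun t _ => (hp t).le)
  simp

lemma mass_nonneg (p : S → ℝ) (hp : ∀ s, 0 < p s) (f : S → ℕ) (y : ℕ) :
    0 ≤ mass p f y :=
  Finset.sum_nonneg fun t _ => (hp t).le

/-- Key lemma: moving `s0` to a bucket `y'` with mass exceeding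
`mass (f s0) - p s0` strictly decreases the entropy. -/
lemma key_move (p : S → ℝ) (hp : ∀ s, 0 < p s) (f : S → ℕ) (s0 : S) (y' : ℕ)
    (hy : y' ≠ f s0)
    (hcond : mass p f (f s0) - p s0 < mass p f y') :
    Hent p (Function.update f s0 y') < Hent p f := by
  classical
  set g := Function.update f s0 y' with hg
  set T : Finset ℕ := Finset.univ.image f ∪ Finset.univ.image g with hT
  have hTf : Finset.univ.image f ⊆ T := Finset.subset_union_left
  have hTg : Finset.univ.image g ⊆ T := Finset.subset_union_right
  rw [Hent_eq_sum p f T hTf, Hent_eq_sum p g T hTg]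
  set y1 := f s0 with hy1
  have hy1T : y1 ∈ T := hTf (Finset.mem_image_of_mem f (Finset.mem_univ s0))
  have hy'T : y' ∈ T := by
    apply hTg
    have : g s0 = y' := Function.update_self _ _ _
    exact this ▸ Finset.mem_image_of_mem g (Finset.mem_univ s0)
  have hy'T1 : y' ∈ T.erase y1 := Finset.mem_erase.2 ⟨hy, hy'T⟩
  have split : ∀ F : ℕ → ℝ, ∑ y ∈ T, F y
      = F y1 + (F y' + ∑ y ∈ (T.erase y1).erase y', F y) := by
    intro F
    rw [Finset.add_sum_erase _ F hy'T1, Finset.add_sum_erase _ F hy1T]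
  rw [split, split]
  have hrest : ∑ y ∈ (T.erase y1).erase y', eta (mass p g y)
      = ∑ y ∈ (T.erase y1).erase y', eta (mass p f y) := by
    refine Finset.sum_congr rfl fun y hy2 => ?_
    have h1 : y ≠ y' := (Finset.mem_erase.1 hy2).1
    have h2 : y ≠ y1 := (Finset.mem_erase.1 (Finset.mem_erase.1 hy2).2).1
    rw [hg, mass_update, if_neg (fun h => h1 h.symm), if_neg (fun h => h2 h.symm)]
    ring_nf
  rw [hrest]
  have hm1 : mass p g y1 = mass p f y1 - p s0 := by
    rw [hg, mass_update, if_neg hy, if_pos rfl]; ring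
  have hm2 : mass p g y' = mass p f y' + p s0 := by
    rw [hg, mass_update, if_pos rfl, if_neg (fun h => hy h.symm)]; ring
  rw [hm1, hm2]
  have h0 : 0 ≤ mass p f y1 - p s0 := by
    have := mass_ge p hp f s0
    simp only [← hy1] at this ⊢
    linarith
  have := eta_incr h0 hcond (hp s0)
  have e : mass p f y1 - p s0 + p s0 = mass p f y1 := by ring
  rw [e] at this
  linarith

end Mass

/-- a valid deterministic padding scheme minimizing the padded-size entropy
is nondecreasing in object size. -/
theorem stmt_3 {S : Type*} [Fintype S] [DecidableEq S] [Nonempty S]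
    (n : S → ℕ) (hn : ∀ s, 1 ≤ n s)
    (p : S → ℝ) (hp : ∀ s, 0 < p s) (hsum : ∑ s, p s = 1)
    (c : ℝ) (hc : 1 ≤ c)
    (f : S → ℕ) (hf : ValidDet n c f)
    (hopt : ∀ g : S → ℕ, ValidDet n c g → Hent p f ≤ Hent p g) :
    ∀ s s' : S, n s < n s' → f s ≤ f s' := by
  intro s s' hns
  by_contra hlt
  push_neg at hlt
  -- f s' < f s
  by_cases hcase : mass p f (f s) - p s < mass p f (f s')
  · -- move s down to f s'
    set g := Function.update f s (f s') with hg
    have hvalid : ValidDet n c g := by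
      intro t
      by_cases ht : t = s
      · subst ht
        rw [hg, Function.update_self]
        constructor
        · exact le_of_lt (lt_of_lt_of_le hns (hf s').1)
        · calc ((f s' : ℕ) : ℝ) ≤ (f t : ℝ) := by exact_mod_cast hlt.le
            _ ≤ c * n t := (hf t).2
      · rw [hg, Function.update_of_ne ht]; exact hf t
    have h1 := hopt g hvalid
    have h2 := key_move p hp f s (f s') (Nat.ne_of_lt hlt) hcase
    rw [← hg] at h2
    linarith
  · push_neg at hcase
    -- mass (f s') ≤ mass (f s) - p s, move s' up to f s
    set g := Function.update f s' (f s) with hg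
    have hvalid : ValidDet n c g := by
      intro t
      by_cases ht : t = s'
      · subst ht
        rw [hg, Function.update_self]
        constructor
        · exact le_trans (hf t).1 hlt.le
        · calc (f s : ℝ) ≤ c * n s := (hf s).2
            _ ≤ c * n t := by
              have : (n s : ℝ) ≤ n t := by exact_mod_cast hns.le
              nlinarith [this, hc]
      · rw [hg, Function.update_of_ne ht]; exact hf t
    have h1 := hopt g hvalid
    have hcond : mass p f (f s') - p s' < mass p f (f s) := by
      have := hp s'
      have := hp s
      linarith
    have h2 := key_move p hp f s' (f s) (ne_of_gt hlt) hcond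
    rw [← hg] at h2
    linarith
end

section
/- Let S* ⊆ S be a subset with p(s) > 0 for all s ∈ S*, such that for all distinct s, s' ∈ S* no natural number y satisfies both n(s) ≤ y ≤ c·n(s) and n(s') ≤ y ≤ c·n(s'). Then every valid randomized padding scheme q satisfies Σ_{y∈ℕ} max_{s ∈ S : p(s) > 0} q(s,y) ≥ |S*|, and consequently I_∞(q) ≥ log₂ |S*|. -/
/-- A randomized padding scheme `q` is valid if `q s y = 0` whenever `y < n s` or
`y > c·n s`. -/
def ValidRand {S : Type*} (n : S → ℕ) (c : ℝ) (q : S → ℕ → ℝ) : Prop :=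
  ∀ s (y : ℕ), (y < n s ∨ c * (n s : ℝ) < (y : ℝ)) → q s y = 0

/-- if `S* ⊆ S` consists of objects with positive probability whose
constraint intervals `[n s, c·n s]` are pairwise disjoint (over ℕ), then every valid
randomized padding scheme `q` satisfies `Σ_y max_{s : p s > 0} q s y ≥ |S*|`, and hence
`I_∞(q) = log₂ Σ_y max_{s : p s > 0} q s y ≥ log₂ |S*|`. -/
theorem stmt_8 {S : Type*} [Fintype S] [Nonempty S]
    (n : S → ℕ) (hn : ∀ s, 1 ≤ n s)
    (p : S → ℝ) (hp : ∀ s, 0 ≤ p s) (hsum : ∑ s, p s = 1)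
    (c : ℝ) (hc : 1 ≤ c)
    (Sstar : Finset S) (hpos : ∀ s ∈ Sstar, 0 < p s)
    (hdisj : ∀ s ∈ Sstar, ∀ s' ∈ Sstar, s ≠ s' → ∀ y : ℕ,
      ¬((n s ≤ y ∧ (y : ℝ) ≤ c * (n s : ℝ)) ∧ (n s' ≤ y ∧ (y : ℝ) ≤ c * (n s' : ℝ))))
    (q : S → ℕ → ℝ) (hq0 : ∀ s y, 0 ≤ q s y) (hq1 : ∀ s, ∑' y, q s y = 1)
    (hqv : ValidRand n c q) :
    (Sstar.card : ℝ) ≤ (∑' y : ℕ, sSup ((fun s => q s y) '' {s : S | 0 < p s})) ∧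
      Real.logb 2 (Sstar.card : ℝ) ≤
        Real.logb 2 (∑' y : ℕ, sSup ((fun s => q s y) '' {s : S | 0 < p s})) := by
  classical
  set P : Set S := {s : S | 0 < p s} with hP
  set f : ℕ → ℝ := fun y => sSup ((fun s => q s y) '' P) with hf
  -- each q s is summable
  have hqsum : ∀ s, Summable (q s) := by
    intro s
    by_contra h
    have h1 := hq1 s
    rw [tsum_eq_zero_of_not_summable h] at h1
    exact one_ne_zero h1.symm
  -- P is nonempty
  have hPne : P.Nonempty := by
    by_contra h
    have hz : ∀ s : S, p s = 0 := fun s =>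
      le_antisymm (not_lt.mp (fun hl => h ⟨s, hl⟩)) (hp s)
    simp [hz] at hsum
  -- support of q s given nonzero
  have hsupp : ∀ s (y : ℕ), q s y ≠ 0 → n s ≤ y ∧ (y : ℝ) ≤ c * (n s : ℝ) := by
    intro s y h
    constructor
    · by_contra hy; exact h (hqv s y (Or.inl (not_le.mp hy)))
    · by_contra hy; exact h (hqv s y (Or.inr (not_le.mp hy)))
  -- basic facts about f
  have hbdd : ∀ y : ℕ, BddAbove ((fun s => q s y) '' P) := by
    intro y
    exact (Set.Finite.image _ (Set.toFinite P)).bddAbove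
  have hfge : ∀ y : ℕ, ∀ s ∈ P, q s y ≤ f y := by
    intro y s hs
    exact le_csSup (hbdd y) ⟨s, hs, rfl⟩
  have hf0 : ∀ y, 0 ≤ f y := by
    intro y
    obtain ⟨s, hs⟩ := hPne
    exact le_trans (hq0 s y) (hfge y s hs)
  have hfle : ∀ y, f y ≤ ∑ s : S, q s y := by
    intro y
    apply csSup_le (hPne.image _)
    rintro x ⟨s, _, rfl⟩
    exact Finset.single_le_sum (fun i _ => hq0 i y) (Finset.mem_univ s)
  -- f is summable
  have hfsum : Summable f := by
    apply Summable.of_nonneg_of_le hf0 hfle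
    exact (hasSum_sum fun s _ => (hqsum s).hasSum).summable
  -- pointwise: sum over Sstar ≤ f y
  have hpt : ∀ y : ℕ, (∑ s ∈ Sstar, q s y) ≤ f y := by
    intro y
    by_cases h : ∀ s ∈ Sstar, q s y = 0
    · rw [Finset.sum_eq_zero h]; exact hf0 y
    · push_neg at h
      obtain ⟨s₀, hs₀, hq₀⟩ := h
      have hzero : ∀ s ∈ Sstar, s ≠ s₀ → q s y = 0 := by
        intro s hs hne
        by_contra hqs
        exact hdisj s hs s₀ hs₀ hne y ⟨hsupp s y hqs, hsupp s₀ y hq₀⟩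
      rw [Finset.sum_eq_single_of_mem s₀ hs₀ hzero]
      exact hfge y s₀ (hpos s₀ hs₀)
  -- card ≤ tsum f
  have hcard : (Sstar.card : ℝ) ≤ ∑' y : ℕ, f y := by
    have h1 : ∑' y : ℕ, (∑ s ∈ Sstar, q s y) = (Sstar.card : ℝ) := by
      rw [Summable.tsum_finsetSum (fun s _ => hqsum s)]
      simp [hq1]
    calc (Sstar.card : ℝ) = ∑' y : ℕ, (∑ s ∈ Sstar, q s y) := h1.symm
      _ ≤ ∑' y : ℕ, f y :=
        Summable.tsum_le_tsum hpt (hasSum_sum fun s _ => (hqsum s).hasSum).summable hfsum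
  -- 1 ≤ tsum f
  have hone : (1 : ℝ) ≤ ∑' y : ℕ, f y := by
    obtain ⟨s, hs⟩ := hPne
    calc (1 : ℝ) = ∑' y, q s y := (hq1 s).symm
      _ ≤ ∑' y : ℕ, f y := Summable.tsum_le_tsum (fun y => hfge y s hs) (hqsum s) hfsum
  refine ⟨hcard, ?_⟩
  rcases Nat.eq_zero_or_pos Sstar.card with h0 | h0
  · rw [h0]
    simp only [Nat.cast_zero, Real.logb_zero]
    calc (0 : ℝ) = Real.logb 2 1 := (Real.logb_one).symm
      _ ≤ Real.logb 2 (∑' y : ℕ, f y) :=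
        Real.logb_le_logb_of_le (by norm_num) one_pos hone
  · exact Real.logb_le_logb_of_le (by norm_num)
      (by exact_mod_cast h0) hcard
end

section
/- For all distinct a, a' ∈ anchors(S), no natural number y satisfies both n(a) ≤ y ≤ c·n(a) and n(a') ≤ y ≤ c·n(a'); that is, the constraint intervals of distinct anchors are pairwise disjoint. -/
/-- The anchor set `anchors(T)`: for nonempty `T`, take the element `A T` of `T`
maximizing `n` (the choice is provided by the function `A`, with `hA` guaranteeing
`A T ∈ T`), set `reach(T) = {s' ∈ T : n (A T) ≤ c·n s'}`, and recurse on `T \ reach(T)`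
(note `A T ∈ reach(T)` since `c ≥ 1`, so `T \ reach(T) = T.filter (¬·)` below). -/
noncomputable def anchors {S : Type*} [DecidableEq S] (n : S → ℕ) (c : ℝ)
    (A : Finset S → S) (hc : 1 ≤ c) (hA : ∀ T : Finset S, T.Nonempty → A T ∈ T)
    (T : Finset S) : Finset S :=
  if h : T.Nonempty then
    insert (A T)
      (anchors n c A hc hA (T.filter fun s' => ¬((n (A T) : ℝ) ≤ c * (n s' : ℝ))))
  else ∅
termination_by T.card
decreasing_by
  refine Finset.card_lt_card ((Finset.ssubset_iff_of_subset (Finset.filter_subset _ _)).mpr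
    ⟨A T, hA T h, ?_⟩)
  intro hmem
  exact (Finset.mem_filter.mp hmem).2 (le_mul_of_one_le_left (by positivity) hc)

/-- The anchor scheme `Z`: `Z s = n (A T)` for the unique step of the above recursion
(started at `T = Finset.univ`) at which `s ∈ reach(T)`. -/
noncomputable def anchorPad {S : Type*} [DecidableEq S] (n : S → ℕ) (c : ℝ)
    (A : Finset S → S) (hc : 1 ≤ c) (hA : ∀ T : Finset S, T.Nonempty → A T ∈ T)
    (T : Finset S) (s : S) : ℕ :=
  if h : T.Nonempty then
    if s ∈ T ∧ (n (A T) : ℝ) ≤ c * (n s : ℝ) then n (A T)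
    else anchorPad n c A hc hA (T.filter fun s' => ¬((n (A T) : ℝ) ≤ c * (n s' : ℝ))) s
  else 0
termination_by T.card
decreasing_by
  refine Finset.card_lt_card ((Finset.ssubset_iff_of_subset (Finset.filter_subset _ _)).mpr
    ⟨A T, hA T h, ?_⟩)
  intro hmem
  exact (Finset.mem_filter.mp hmem).2 (le_mul_of_one_le_left (by positivity) hc)

lemma anchors_subset {S : Type*} [DecidableEq S] (n : S → ℕ) (c : ℝ)
    (A : Finset S → S) (hc : 1 ≤ c) (hA : ∀ T : Finset S, T.Nonempty → A T ∈ T)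
    (T : Finset S) : anchors n c A hc hA T ⊆ T := by
  induction T using Finset.strongInduction with
  | _ T ih =>
    rw [anchors]
    split
    · next h =>
      intro x hx
      rcases Finset.mem_insert.mp hx with rfl | hx
      · exact hA T h
      · refine Finset.filter_subset _ _ (ih _ ?_ hx)
        refine (Finset.ssubset_iff_of_subset (Finset.filter_subset _ _)).mpr
          ⟨A T, hA T h, ?_⟩
        intro hmem
        exact (Finset.mem_filter.mp hmem).2 (le_mul_of_one_le_left (by positivity) hc)
    · simp

lemma anchors_disj {S : Type*} [DecidableEq S] (n : S → ℕ) (c : ℝ)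
    (A : Finset S → S) (hc : 1 ≤ c) (hA : ∀ T : Finset S, T.Nonempty → A T ∈ T)
    (T : Finset S) :
    ∀ a ∈ anchors n c A hc hA T, ∀ a' ∈ anchors n c A hc hA T,
      a ≠ a' → ∀ y : ℕ,
        ¬((n a ≤ y ∧ (y : ℝ) ≤ c * (n a : ℝ)) ∧
          (n a' ≤ y ∧ (y : ℝ) ≤ c * (n a' : ℝ))) := by
  induction T using Finset.strongInduction with
  | _ T ih =>
    intro a ha a' ha' hne y hy
    rw [anchors] at ha ha'
    split at ha
    · next h =>
      have hss : T.filter (fun s' => ¬((n (A T) : ℝ) ≤ c * (n s' : ℝ))) ⊂ T := by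
        refine (Finset.ssubset_iff_of_subset (Finset.filter_subset _ _)).mpr
          ⟨A T, hA T h, ?_⟩
        intro hmem
        exact (Finset.mem_filter.mp hmem).2 (le_mul_of_one_le_left (by positivity) hc)
      rw [dif_pos h] at ha'
      rcases Finset.mem_insert.mp ha with rfl | ha <;>
        rcases Finset.mem_insert.mp ha' with h' | ha'
      · exact hne h'.symm
      · have := (Finset.mem_filter.mp (anchors_subset n c A hc hA _ ha')).2
        have h1 : (n (A T) : ℝ) ≤ (y : ℝ) := by exact_mod_cast hy.1.1
        have h2 : (y : ℝ) ≤ c * (n a' : ℝ) := hy.2.2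
        exact this (le_trans h1 h2)
      · subst h'
        have := (Finset.mem_filter.mp (anchors_subset n c A hc hA _ ha)).2
        have h1 : (n (A T) : ℝ) ≤ (y : ℝ) := by exact_mod_cast hy.2.1
        have h2 : (y : ℝ) ≤ c * (n a : ℝ) := hy.1.2
        exact this (le_trans h1 h2)
      · exact ih _ hss a ha a' ha' hne y hy
    · exact absurd ha (Finset.notMem_empty a)

/-- distinct anchors have disjoint constraint intervals: for distinct
`a, a' ∈ anchors(S)`, no `y ∈ ℕ` satisfies both `n a ≤ y ≤ c·n a` and
`n a' ≤ y ≤ c·n a'`. -/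
theorem stmt_11 {S : Type*} [Fintype S] [DecidableEq S] [Nonempty S]
    (n : S → ℕ) (hn : ∀ s, 1 ≤ n s)
    (p : S → ℝ) (hp : ∀ s, 0 ≤ p s) (hsum : ∑ s, p s = 1)
    (c : ℝ) (hc : 1 ≤ c)
    (A : Finset S → S) (hA : ∀ T : Finset S, T.Nonempty → A T ∈ T)
    (hAmax : ∀ T : Finset S, T.Nonempty → ∀ s ∈ T, n s ≤ n (A T)) :
    ∀ a ∈ anchors n c A hc hA Finset.univ, ∀ a' ∈ anchors n c A hc hA Finset.univ,
      a ≠ a' → ∀ y : ℕ,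
        ¬((n a ≤ y ∧ (y : ℝ) ≤ c * (n a : ℝ)) ∧
          (n a' ≤ y ∧ (y : ℝ) ≤ c * (n a' : ℝ))) := by
  exact anchors_disj n c A hc hA Finset.univ
end

section
/- The cardinality |anchors(S)| equals the maximum cardinality of a subset S* ⊆ S such that for all distinct s, s' ∈ S* no natural number y satisfies both n(s) ≤ y ≤ c·n(s) and n(s') ≤ y ≤ c·n(s'). -/
lemma anchors_filter_ssubset {S : Type*} [DecidableEq S] (n : S → ℕ) (c : ℝ)
    (A : Finset S → S) (hc : 1 ≤ c) (hA : ∀ T : Finset S, T.Nonempty → A T ∈ T)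
    (T : Finset S) (h : T.Nonempty) :
    (T.filter fun s' => ¬((n (A T) : ℝ) ≤ c * (n s' : ℝ))) ⊂ T := by
  refine (Finset.ssubset_iff_of_subset (Finset.filter_subset _ _)).mpr
    ⟨A T, hA T h, ?_⟩
  intro hmem
  exact (Finset.mem_filter.mp hmem).2 (le_mul_of_one_le_left (by positivity) hc)

lemma anchors_pairwise {S : Type*} [DecidableEq S] (n : S → ℕ) (c : ℝ)
    (A : Finset S → S) (hc : 1 ≤ c) (hA : ∀ T : Finset S, T.Nonempty → A T ∈ T)
    (T : Finset S) :
    ∀ s ∈ anchors n c A hc hA T, ∀ s' ∈ anchors n c A hc hA T, s ≠ s' → ∀ y : ℕ,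
      ¬((n s ≤ y ∧ (y : ℝ) ≤ c * (n s : ℝ)) ∧
        (n s' ≤ y ∧ (y : ℝ) ≤ c * (n s' : ℝ))) := by
  induction T using Finset.strongInduction with
  | _ T ih =>
    rw [anchors]
    split_ifs with h
    · set T' := T.filter fun s' => ¬((n (A T) : ℝ) ≤ c * (n s' : ℝ)) with hT'
      have hkey : ∀ s' ∈ anchors n c A hc hA T', ∀ y : ℕ,
          ¬((n (A T) ≤ y ∧ (y : ℝ) ≤ c * (n (A T) : ℝ)) ∧
            (n s' ≤ y ∧ (y : ℝ) ≤ c * (n s' : ℝ))) := by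
        intro s' hs' y hy
        have hs'T' : s' ∈ T' := anchors_subset n c A hc hA T' hs'
        have hlt : c * (n s' : ℝ) < n (A T) := by
          have := (Finset.mem_filter.mp hs'T').2
          linarith [lt_of_not_ge this]
        have h1 : (n (A T) : ℝ) ≤ y := by exact_mod_cast hy.1.1
        linarith [hy.2.2]
      intro s hs s' hs' hne y hy
      rcases Finset.mem_insert.mp hs with rfl | hs
      · rcases Finset.mem_insert.mp hs' with rfl | hs'
        · exact hne rfl
        · exact hkey s' hs' y hy
      · rcases Finset.mem_insert.mp hs' with rfl | hs'
        · exact hkey s hs y ⟨hy.2, hy.1⟩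
        · exact ih T' (anchors_filter_ssubset n c A hc hA T h) s hs s' hs' hne y hy
    · simp

lemma anchors_card_ge {S : Type*} [DecidableEq S] (n : S → ℕ) (c : ℝ)
    (A : Finset S → S) (hc : 1 ≤ c) (hA : ∀ T : Finset S, T.Nonempty → A T ∈ T)
    (hAmax : ∀ T : Finset S, T.Nonempty → ∀ s ∈ T, n s ≤ n (A T))
    (T : Finset S) : ∀ Sstar : Finset S, Sstar ⊆ T →
    (∀ s ∈ Sstar, ∀ s' ∈ Sstar, s ≠ s' → ∀ y : ℕ,
      ¬((n s ≤ y ∧ (y : ℝ) ≤ c * (n s : ℝ)) ∧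
        (n s' ≤ y ∧ (y : ℝ) ≤ c * (n s' : ℝ)))) →
    Sstar.card ≤ (anchors n c A hc hA T).card := by
  induction T using Finset.strongInduction with
  | _ T ih =>
    intro Sstar hsub hdisj
    rw [anchors]
    split_ifs with h
    · set T' := T.filter fun s' => ¬((n (A T) : ℝ) ≤ c * (n s' : ℝ)) with hT'
      set Sneg := Sstar.filter fun s => ¬((n (A T) : ℝ) ≤ c * (n s : ℝ)) with hSneg
      set Spos := Sstar.filter fun s => ((n (A T) : ℝ) ≤ c * (n s : ℝ)) with hSpos
      have hnegsub : Sneg ⊆ T' := by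
        intro x hx
        rw [hSneg, Finset.mem_filter] at hx
        exact Finset.mem_filter.mpr ⟨hsub hx.1, hx.2⟩
      have hih : Sneg.card ≤ (anchors n c A hc hA T').card :=
        ih T' (anchors_filter_ssubset n c A hc hA T h) Sneg hnegsub
          (fun s hs s' hs' => hdisj s (Finset.filter_subset _ _ hs)
            s' (Finset.filter_subset _ _ hs'))
      have hposcard : Spos.card ≤ 1 := by
        rw [Finset.card_le_one]
        intro a ha b hb
        by_contra hne
        rw [hSpos, Finset.mem_filter] at ha hb
        refine hdisj a ha.1 b hb.1 hne (n (A T)) ⟨⟨?_, ha.2⟩, ?_, hb.2⟩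
        · exact hAmax T h a (hsub ha.1)
        · exact hAmax T h b (hsub hb.1)
      have hAnotin : A T ∉ anchors n c A hc hA T' := by
        intro hmem
        have := anchors_subset n c A hc hA T' hmem
        exact (Finset.mem_filter.mp this).2 (le_mul_of_one_le_left (by positivity) hc)
      rw [Finset.card_insert_of_notMem hAnotin]
      have hunion : Sstar = Spos ∪ Sneg := (Finset.filter_union_filter_not_eq _ _).symm
      calc Sstar.card ≤ Spos.card + Sneg.card := hunion ▸ Finset.card_union_le _ _
        _ ≤ (anchors n c A hc hA T').card + 1 := by omega
    · have : Sstar = ∅ := Finset.subset_empty.mp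
        (hsub.trans (Finset.not_nonempty_iff_eq_empty.mp h ▸ Finset.Subset.refl _))
      simp [this]

/-- `|anchors(S)|` is the maximum cardinality of a subset `S* ⊆ S` whose
constraint intervals `[n s, c·n s]` (over ℕ) are pairwise disjoint. -/
theorem stmt_13 {S : Type*} [Fintype S] [DecidableEq S] [Nonempty S]
    (n : S → ℕ) (hn : ∀ s, 1 ≤ n s)
    (p : S → ℝ) (hp : ∀ s, 0 ≤ p s) (hsum : ∑ s, p s = 1)
    (c : ℝ) (hc : 1 ≤ c)
    (A : Finset S → S) (hA : ∀ T : Finset S, T.Nonempty → A T ∈ T)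
    (hAmax : ∀ T : Finset S, T.Nonempty → ∀ s ∈ T, n s ≤ n (A T)) :
    IsGreatest
      {k : ℕ | ∃ Sstar : Finset S,
        (∀ s ∈ Sstar, ∀ s' ∈ Sstar, s ≠ s' → ∀ y : ℕ,
          ¬((n s ≤ y ∧ (y : ℝ) ≤ c * (n s : ℝ)) ∧
            (n s' ≤ y ∧ (y : ℝ) ≤ c * (n s' : ℝ)))) ∧
        Sstar.card = k}
      (anchors n c A hc hA Finset.univ).card := by
  constructor
  · exact ⟨anchors n c A hc hA Finset.univ,
      anchors_pairwise n c A hc hA Finset.univ, rfl⟩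
  · rintro k ⟨Sstar, hdisj, rfl⟩
    exact anchors_card_ge n c A hc hA hAmax Finset.univ Sstar
      (Finset.subset_univ _) hdisj
end

section
/- Let s ∈ S be such that for every s' ∈ S with s' ≠ s, either c·n(s') < n(s) or c·n(s) < n(s'). Then for every valid randomized padding scheme q: Σ over y ∈ ℕ with n(s) ≤ y ≤ c·n(s) of q(s,y) equals 1, and q(s',y) = 0 for every s' ≠ s and every y ∈ ℕ with n(s) ≤ y ≤ c·n(s). In particular, a returned padded size in the range [n(s), c·n(s)] occurs exactly when the requested object is s. -/
/-- if the constraint interval of `s` is disjoint from that of every other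
object (i.e. for every `s' ≠ s` either `c·n s' < n s` or `c·n s < n s'`), then for every
valid randomized padding scheme `q`, the total probability that `s` is padded to a size
in `[n s, c·n s]` is `1`, and `q s' y = 0` for every `s' ≠ s` and every `y` in that
range. -/
theorem stmt_14 {S : Type*} [Fintype S] [Nonempty S]
    (n : S → ℕ) (hn : ∀ s, 1 ≤ n s)
    (p : S → ℝ) (hp : ∀ s, 0 ≤ p s) (hsum : ∑ s, p s = 1)
    (c : ℝ) (hc : 1 ≤ c)
    (s : S)
    (hiso : ∀ s' : S, s' ≠ s →
      c * (n s' : ℝ) < (n s : ℝ) ∨ c * (n s : ℝ) < (n s' : ℝ))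
    (q : S → ℕ → ℝ) (hq0 : ∀ s y, 0 ≤ q s y) (hq1 : ∀ s, ∑' y, q s y = 1)
    (hqv : ValidRand n c q) :
    (∑' y : ℕ, if n s ≤ y ∧ (y : ℝ) ≤ c * (n s : ℝ) then q s y else 0) = 1 ∧
      ∀ s' : S, s' ≠ s → ∀ y : ℕ, n s ≤ y → (y : ℝ) ≤ c * (n s : ℝ) → q s' y = 0 := by
  constructor
  · have h : ∀ y : ℕ, (if n s ≤ y ∧ (y : ℝ) ≤ c * (n s : ℝ) then q s y else 0) = q s y := by
      intro y
      by_cases hy : n s ≤ y ∧ (y : ℝ) ≤ c * (n s : ℝ)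
      · simp [hy]
      · rw [if_neg hy]
        push_neg at hy
        rcases lt_or_ge y (n s) with h1 | h1
        · exact (hqv s y (Or.inl h1)).symm
        · exact (hqv s y (Or.inr (hy h1))).symm
    rw [tsum_congr h]
    exact hq1 s
  · intro s' hs' y hy1 hy2
    rcases hiso s' hs' with h | h
    · refine hqv s' y (Or.inr ?_)
      calc c * (n s' : ℝ) < (n s : ℝ) := h
        _ ≤ (y : ℝ) := by exact_mod_cast hy1
    · refine hqv s' y (Or.inl ?_)
      have : (y : ℝ) < (n s' : ℝ) := lt_of_le_of_lt hy2 h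
      exact_mod_cast this
end
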